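/- Let k, m, n be positive integers with k dividing m and n > m/k, and let A be the m×n matrix defined by: for columns 1 ≤ i ≤ m/k, A_{j,i} = 1/√k if (i−1)k < j ≤ i·k and 0 otherwise; for columns m/k < i ≤ n, A_{j,i} = 1/√m for all j. Set w = n − m/k. Then the eigenvalues of the n×n matrix AᵀA are: w + 1 with multiplicity 1, the eigenvalue 1 with multiplicity m/k − 1, and 0 with multiplicity n − m/k. -/

import Mathlib

set_option maxHeartbeats 1000000

open scoped BigOperators
open Polynomial Matrix

private theorem my_charpoly_transpose {n : Type*} [Fintype n] [DecidableEq n]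
    {R : Type*} [CommRing R] (M : Matrix n n R) : Mᵀ.charpoly = M.charpoly := by
  rw [Matrix.charpoly, Matrix.charpoly, ← Matrix.det_transpose (charmatrix M)]
  congr 1
  ext i j
  by_cases h : i = j
  · subst h; simp [charmatrix_apply_eq]
  · rw [Matrix.transpose_apply, charmatrix_apply_ne _ _ _ h,
      charmatrix_apply_ne _ _ _ (Ne.symm h), Matrix.transpose_apply]

private theorem my_charpoly_conj {n : Type*} [Fintype n] [DecidableEq n]
    {R : Type*} [CommRing R] (P M Q : Matrix n n R)
    (hPQ : P * Q = 1) : (P * M * Q).charpoly = M.charpoly := by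
  have key : charmatrix (P * M * Q) = P.map C * charmatrix M * Q.map C := by
    rw [charmatrix, charmatrix]
    rw [mul_sub, sub_mul]
    congr 1
    · have h1 : P.map (C : R →+* R[X]) * Matrix.scalar n (X : R[X]) =
          Matrix.scalar n (X : R[X]) * P.map C :=
        (Matrix.scalar_commute (X : R[X]) (fun r => Commute.all _ _) _).symm
      rw [h1, Matrix.mul_assoc, ← Matrix.map_mul, hPQ]
      simp
    · simp only [RingHom.mapMatrix_apply, ← Matrix.map_mul]
  rw [Matrix.charpoly, Matrix.charpoly, key, Matrix.det_mul, Matrix.det_mul]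
  have h2 : P.map (C : R →+* R[X]) * Q.map C = 1 := by
    rw [← Matrix.map_mul, hPQ]; simp
  have hdet : (P.map (C : R →+* R[X])).det * (Q.map C).det = 1 := by
    rw [← Matrix.det_mul, h2, Matrix.det_one]
  calc (P.map (C : R →+* R[X])).det * (charmatrix M).det * (Q.map C).det
      = (charmatrix M).det * ((P.map (C : R →+* R[X])).det * (Q.map C).det) := by ring
    _ = (charmatrix M).det := by rw [hdet, mul_one]

namespace GramAuxDefs

def dl (t y : ℕ) : ℝ := if y = t then 1 else 0
def chi (r y : ℕ) : ℝ := if y < r then 1 else 0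

lemma sum_dl {n t : ℕ} (ht : t < n) : ∑ y : Fin n, dl t (y : ℕ) = 1 := by
  rw [Fin.sum_univ_eq_sum_range (fun y => dl t y)]
  unfold dl
  rw [Finset.sum_ite_eq' (Finset.range n) t (fun _ => (1 : ℝ)), if_pos (Finset.mem_range.mpr ht)]

lemma sum_chi {n r : ℕ} (h : r ≤ n) : ∑ y : Fin n, chi r (y : ℕ) = r := by
  rw [Fin.sum_univ_eq_sum_range (fun y => chi r y)]
  unfold chi
  rw [Finset.sum_congr rfl (fun y _ => by simp [Finset.mem_range] :
      ∀ y ∈ Finset.range n, (if y < r then (1:ℝ) else 0) = if y ∈ Finset.range r then 1 else 0),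
    Finset.sum_ite_mem, Finset.inter_eq_right.mpr (Finset.range_subset_range.mpr h),
    Finset.sum_const, Finset.card_range, nsmul_eq_mul, mul_one]

lemma sum_combo {n r t1 t2 : ℕ} (h : r ≤ n) (ht1 : t1 < n) (ht2 : t2 < n)
    (c1 c2 c3 c4 : ℝ) :
    ∑ y : Fin n, (c1 * dl t1 (y : ℕ) + c2 * dl t2 (y : ℕ) + c3 * chi r (y : ℕ) + c4)
      = c1 + c2 + c3 * r + n * c4 := by
  rw [Finset.sum_add_distrib, Finset.sum_add_distrib, Finset.sum_add_distrib,
    ← Finset.mul_sum, ← Finset.mul_sum, ← Finset.mul_sum, sum_dl ht1, sum_dl ht2, sum_chi h,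
    Finset.sum_const, Finset.card_univ, Fintype.card_fin, nsmul_eq_mul, mul_one, mul_one]

lemma sum_block {m a b : ℕ} (hb : b ≤ m) (c : ℝ) :
    ∑ j : Fin m, (if a ≤ (j : ℕ) ∧ (j : ℕ) < b then c else 0) = (b - a : ℕ) * c := by
  rw [Fin.sum_univ_eq_sum_range (fun j => if a ≤ j ∧ j < b then c else 0)]
  rw [Finset.sum_congr rfl (fun j _ => by simp [Finset.mem_Ico] :
      ∀ j ∈ Finset.range m, (if a ≤ j ∧ j < b then c else 0) = if j ∈ Finset.Ico a b then c else 0),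
    Finset.sum_ite_mem, Finset.inter_eq_right.mpr
      (fun x hx => by
        simp only [Finset.mem_Ico] at hx
        exact Finset.mem_range.mpr (lt_of_lt_of_le hx.2 hb)),
    Finset.sum_const, Nat.card_Ico, nsmul_eq_mul]

noncomputable def Pm (n r : ℕ) (s : ℝ) : Matrix (Fin n) (Fin n) ℝ :=
  fun x j =>
    if (j : ℕ) = 0 then dl 0 (x : ℕ)
    else if (j : ℕ) < r then dl (j : ℕ) (x : ℕ) - dl 0 (x : ℕ)
    else dl (j : ℕ) (x : ℕ) - s⁻¹ * chi r (x : ℕ)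

noncomputable def Qm (n r : ℕ) (s : ℝ) : Matrix (Fin n) (Fin n) ℝ :=
  fun j x =>
    if (j : ℕ) = 0 then chi r (x : ℕ) + s * (1 - chi r (x : ℕ))
    else if (j : ℕ) < r then dl (j : ℕ) (x : ℕ) + s⁻¹ * (1 - chi r (x : ℕ))
    else dl (j : ℕ) (x : ℕ)

noncomputable def Mm (n r : ℕ) (wR s : ℝ) : Matrix (Fin n) (Fin n) ℝ :=
  fun x j =>
    if (j : ℕ) = 0 then
      (wR + 1) * dl 0 (x : ℕ) + (wR * s⁻¹ * s⁻¹) * (chi r (x : ℕ) - dl 0 (x : ℕ))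
        + s⁻¹ * (1 - chi r (x : ℕ))
    else if (j : ℕ) < r then dl (j : ℕ) (x : ℕ)
    else 0

theorem QP_eq_one {n r : ℕ} (hr : 0 < r) (hrn : r < n) {s : ℝ} (hs0 : s ≠ 0)
    (hs2 : s * s = (r : ℝ)) : Qm n r s * Pm n r s = 1 := by
  have hn0 : 0 < n := hr.trans hrn
  ext a b
  rw [Matrix.mul_apply, Matrix.one_apply]
  have key : ∀ (t1 t2 : ℕ), t1 < n → t2 < n → ∀ (c1 c2 c3 c4 : ℝ),
      (∀ y : Fin n, Qm n r s a y * Pm n r s y b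
        = c1 * dl t1 (y : ℕ) + c2 * dl t2 (y : ℕ) + c3 * chi r (y : ℕ) + c4) →
      ∑ y : Fin n, Qm n r s a y * Pm n r s y b = c1 + c2 + c3 * r + n * c4 := by
    intro t1 t2 ht1 ht2 c1 c2 c3 c4 h
    rw [Finset.sum_congr rfl (fun y _ => h y), sum_combo hrn.le ht1 ht2]
  rcases eq_or_ne ((b : ℕ)) 0 with hb0 | hb0
  · rcases eq_or_ne ((a : ℕ)) 0 with ha0 | ha0
    · rw [key 0 0 hn0 hn0 1 0 0 0 (fun y => by
        unfold Qm Pm dl chi; split_ifs <;> first | ring1 | (exfalso; omega)),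
        if_pos (Fin.val_injective (by omega : (a:ℕ) = (b:ℕ)))]
      ring
    · rw [key 0 0 hn0 hn0 0 0 0 0 (fun y => by
        unfold Qm Pm dl chi; split_ifs <;> first | ring1 | (exfalso; omega)),
        if_neg (fun h => by rw [h] at ha0; exact ha0 hb0)]
      ring
  · rcases lt_or_ge ((b : ℕ)) r with hbr | hbr
    · rcases eq_or_ne ((a : ℕ)) 0 with ha0 | ha0
      · rw [key (b:ℕ) 0 b.isLt hn0 1 (-1) 0 0 (fun y => by
          unfold Qm Pm dl chi; split_ifs <;> first | ring1 | (exfalso; omega)),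
          if_neg (fun h => by rw [← h] at hb0; exact hb0 ha0)]
        ring
      · rcases lt_or_ge ((a : ℕ)) r with har | har
        · rcases eq_or_ne ((a : ℕ)) ((b : ℕ)) with hab | hab
          · rw [key (b:ℕ) 0 b.isLt hn0 1 0 0 0 (fun y => by
              unfold Qm Pm dl chi; split_ifs <;> first | ring1 | (exfalso; omega)),
              if_pos (Fin.val_injective hab)]
            ring
          · rw [key 0 0 hn0 hn0 0 0 0 0 (fun y => by
              unfold Qm Pm dl chi; split_ifs <;> first | ring1 | (exfalso; omega)),
              if_neg (fun h => hab (congrArg Fin.val h))]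
            ring
        · rw [key 0 0 hn0 hn0 0 0 0 0 (fun y => by
            unfold Qm Pm dl chi; split_ifs <;> first | ring1 | (exfalso; omega)),
            if_neg (fun h => by rw [h] at har; omega)]
          ring
    · rcases eq_or_ne ((a : ℕ)) 0 with ha0 | ha0
      · rw [key (b:ℕ) 0 b.isLt hn0 s 0 (-s⁻¹) 0 (fun y => by
          unfold Qm Pm dl chi; split_ifs <;> first | ring1 | (exfalso; omega)),
          if_neg (fun h => by rw [← h] at hbr; omega)]
        field_simp
        linarith [hs2]
      · rcases lt_or_ge ((a : ℕ)) r with har | har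
        · rw [key (b:ℕ) (a:ℕ) b.isLt a.isLt s⁻¹ (-s⁻¹) 0 0 (fun y => by
            unfold Qm Pm dl chi; split_ifs <;> first | ring1 | (exfalso; omega)),
            if_neg (fun h => by rw [h] at har; omega)]
          ring
        · rcases eq_or_ne ((a : ℕ)) ((b : ℕ)) with hab | hab
          · rw [key (b:ℕ) 0 b.isLt hn0 1 0 0 0 (fun y => by
              unfold Qm Pm dl chi; split_ifs <;> first | ring1 | (exfalso; omega)),
              if_pos (Fin.val_injective hab)]
            ring
          · rw [key 0 0 hn0 hn0 0 0 0 0 (fun y => by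
              unfold Qm Pm dl chi; split_ifs <;> first | ring1 | (exfalso; omega)),
              if_neg (fun h => hab (congrArg Fin.val h))]
            ring

theorem GP_eq_PM {n r : ℕ} (hr : 0 < r) (hrn : r < n) {s wR : ℝ} (hs0 : s ≠ 0)
    (hs2 : s * s = (r : ℝ)) (hn' : (n : ℝ) = (r : ℝ) + wR)
    (G : Matrix (Fin n) (Fin n) ℝ)
    (hG : ∀ i i' : Fin n, G i i' =
      if (i : ℕ) < r then
        (if (i' : ℕ) < r then (if (i : ℕ) = (i' : ℕ) then 1 else 0) else s⁻¹)
      else (if (i' : ℕ) < r then s⁻¹ else 1)) :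
    G * Pm n r s = Pm n r s * Mm n r wR s := by
  have hn0 : 0 < n := hr.trans hrn
  ext a b
  rw [Matrix.mul_apply, Matrix.mul_apply]
  have keyL : ∀ (t1 t2 : ℕ), t1 < n → t2 < n → ∀ (c1 c2 c3 c4 : ℝ),
      (∀ y : Fin n, G a y * Pm n r s y b
        = c1 * dl t1 (y : ℕ) + c2 * dl t2 (y : ℕ) + c3 * chi r (y : ℕ) + c4) →
      ∑ y : Fin n, G a y * Pm n r s y b = c1 + c2 + c3 * r + n * c4 := by
    intro t1 t2 ht1 ht2 c1 c2 c3 c4 h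
    rw [Finset.sum_congr rfl (fun y _ => h y), sum_combo hrn.le ht1 ht2]
  have keyR : ∀ (t1 t2 : ℕ), t1 < n → t2 < n → ∀ (c1 c2 c3 c4 : ℝ),
      (∀ y : Fin n, Pm n r s a y * Mm n r wR s y b
        = c1 * dl t1 (y : ℕ) + c2 * dl t2 (y : ℕ) + c3 * chi r (y : ℕ) + c4) →
      ∑ y : Fin n, Pm n r s a y * Mm n r wR s y b = c1 + c2 + c3 * r + n * c4 := by
    intro t1 t2 ht1 ht2 c1 c2 c3 c4 h
    rw [Finset.sum_congr rfl (fun y _ => h y), sum_combo hrn.le ht1 ht2]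
  rcases eq_or_ne ((b : ℕ)) 0 with hb0 | hb0
  · rcases eq_or_ne ((a : ℕ)) 0 with ha0 | ha0
    · rw [keyL 0 0 hn0 hn0 1 0 0 0 (fun y => by
        rw [hG]; unfold Pm dl chi; split_ifs <;> first | ring1 | (exfalso; omega)),
        keyR 0 0 hn0 hn0 (wR + 1 + wR * (s⁻¹ * s⁻¹)) 0 (s⁻¹ * s⁻¹ - wR * (s⁻¹ * s⁻¹))
          (-(s⁻¹ * s⁻¹)) (fun y => by
        unfold Pm Mm dl chi; split_ifs <;> first | ring1 | (exfalso; omega)),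
        hn', ← hs2]
      field_simp
      ring
    · rcases lt_or_ge ((a : ℕ)) r with har | har
      · rw [keyL 0 0 hn0 hn0 0 0 0 0 (fun y => by
          rw [hG]; unfold Pm dl chi; split_ifs <;> first | ring1 | (exfalso; omega)),
          keyR (a : ℕ) 0 a.isLt hn0 (wR * (s⁻¹ * s⁻¹)) 0 (s⁻¹ * s⁻¹) (-(s⁻¹ * s⁻¹))
            (fun y => by
          unfold Pm Mm dl chi; split_ifs <;> first | ring1 | (exfalso; omega)),
          hn', ← hs2]
        field_simp
        ring
      · rw [keyL 0 0 hn0 hn0 s⁻¹ 0 0 0 (fun y => by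
          rw [hG]; unfold Pm dl chi; split_ifs <;> first | ring1 | (exfalso; omega)),
          keyR (a : ℕ) 0 a.isLt hn0 s⁻¹ 0 0 0 (fun y => by
          unfold Pm Mm dl chi; split_ifs <;> first | ring1 | (exfalso; omega))]
  · rcases lt_or_ge ((b : ℕ)) r with hbr | hbr
    · rcases eq_or_ne ((a : ℕ)) 0 with ha0 | ha0
      · rw [keyL (b : ℕ) 0 b.isLt hn0 0 (-1) 0 0 (fun y => by
          rw [hG]; unfold Pm dl chi; split_ifs <;> first | ring1 | (exfalso; omega)),
          keyR (b : ℕ) 0 b.isLt hn0 (-1) 0 0 0 (fun y => by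
          unfold Pm Mm dl chi; split_ifs <;> first | ring1 | (exfalso; omega))]
        ring
      · rcases lt_or_ge ((a : ℕ)) r with har | har
        · rcases eq_or_ne ((a : ℕ)) ((b : ℕ)) with hab | hab
          · rw [keyL (b : ℕ) 0 b.isLt hn0 1 0 0 0 (fun y => by
              rw [hG]; unfold Pm dl chi; split_ifs <;> first | ring1 | (exfalso; omega)),
              keyR (b : ℕ) 0 b.isLt hn0 1 0 0 0 (fun y => by
              unfold Pm Mm dl chi; split_ifs <;> first | ring1 | (exfalso; omega))]
          · rw [keyL 0 0 hn0 hn0 0 0 0 0 (fun y => by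
              rw [hG]; unfold Pm dl chi; split_ifs <;> first | ring1 | (exfalso; omega)),
              keyR 0 0 hn0 hn0 0 0 0 0 (fun y => by
              unfold Pm Mm dl chi; split_ifs <;> first | ring1 | (exfalso; omega))]
        · rw [keyL (b : ℕ) 0 b.isLt hn0 s⁻¹ (-s⁻¹) 0 0 (fun y => by
            rw [hG]; unfold Pm dl chi; split_ifs <;> first | ring1 | (exfalso; omega)),
            keyR 0 0 hn0 hn0 0 0 0 0 (fun y => by
            unfold Pm Mm dl chi; split_ifs <;> first | ring1 | (exfalso; omega))]
          ring
    · rcases eq_or_ne ((a : ℕ)) 0 with ha0 | ha0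
      · rw [keyL (b : ℕ) 0 b.isLt hn0 s⁻¹ (-s⁻¹) 0 0 (fun y => by
          rw [hG]; unfold Pm dl chi; split_ifs <;> first | ring1 | (exfalso; omega)),
          keyR 0 0 hn0 hn0 0 0 0 0 (fun y => by
          unfold Pm Mm dl chi; split_ifs <;> first | ring1 | (exfalso; omega))]
        ring
      · rcases lt_or_ge ((a : ℕ)) r with har | har
        · rw [keyL (b : ℕ) (a : ℕ) b.isLt a.isLt s⁻¹ (-s⁻¹) 0 0 (fun y => by
            rw [hG]; unfold Pm dl chi; split_ifs <;> first | ring1 | (exfalso; omega)),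
            keyR 0 0 hn0 hn0 0 0 0 0 (fun y => by
            unfold Pm Mm dl chi; split_ifs <;> first | ring1 | (exfalso; omega))]
          ring
        · rw [keyL (b : ℕ) 0 b.isLt hn0 1 0 (-(s⁻¹ * s⁻¹)) 0 (fun y => by
            rw [hG]; unfold Pm dl chi; split_ifs <;> first | ring1 | (exfalso; omega)),
            keyR 0 0 hn0 hn0 0 0 0 0 (fun y => by
            unfold Pm Mm dl chi; split_ifs <;> first | ring1 | (exfalso; omega)),
            ← hs2]
          field_simp
          ring

theorem Mm_triangular (n r : ℕ) (wR s : ℝ) : ((Mm n r wR s)ᵀ).BlockTriangular id := by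
  intro i j hij
  have h : (j : ℕ) < (i : ℕ) := hij
  rw [Matrix.transpose_apply]
  unfold Mm dl chi
  split_ifs <;> first | ring1 | (exfalso; omega)

theorem Mm_charpoly {n r : ℕ} (hr : 0 < r) (hrn : r < n) (wR s : ℝ) :
    (Mm n r wR s).charpoly = (X - C (wR + 1)) * (X - 1) ^ (r - 1) * X ^ (n - r) := by
  rw [← my_charpoly_transpose, Matrix.charpoly_of_upperTriangular _ (Mm_triangular n r wR s)]
  have hdiag : ∀ i : Fin n, (X - C ((Mm n r wR s)ᵀ i i)) =
      X - C (if (i : ℕ) = 0 then wR + 1 else if (i : ℕ) < r then 1 else 0) := by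
    intro i
    congr 1
    congr 1
    rw [Matrix.transpose_apply]
    unfold Mm dl chi
    split_ifs <;> first | ring1 | (exfalso; omega)
  rw [Finset.prod_congr rfl (fun i _ => hdiag i),
    Fin.prod_univ_eq_prod_range
      (fun i => X - C (if i = 0 then wR + 1 else if i < r then (1:ℝ) else 0)),
    ← Finset.prod_range_mul_prod_Ico _ hrn.le,
    ← Finset.prod_range_mul_prod_Ico _ hr]
  have h1 : ∏ i ∈ Finset.range 1,
      (X - C (if i = 0 then wR + 1 else if i < r then (1:ℝ) else 0)) = X - C (wR + 1) := by
    rw [Finset.prod_range_one, if_pos rfl]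
  have h2 : ∏ i ∈ Finset.Ico 1 r,
      (X - C (if i = 0 then wR + 1 else if i < r then (1:ℝ) else 0)) = (X - 1) ^ (r - 1) := by
    have e2 : ∀ i ∈ Finset.Ico 1 r,
        (X - C (if i = 0 then wR + 1 else if i < r then (1:ℝ) else 0)) = X - 1 := by
      intro i hi
      rw [Finset.mem_Ico] at hi
      rw [if_neg (by omega), if_pos hi.2, Polynomial.C_1]
    rw [Finset.prod_congr rfl e2, Finset.prod_const, Nat.card_Ico]
  have h3 : ∏ i ∈ Finset.Ico r n,
      (X - C (if i = 0 then wR + 1 else if i < r then (1:ℝ) else 0)) = X ^ (n - r) := by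
    have e3 : ∀ i ∈ Finset.Ico r n,
        (X - C (if i = 0 then wR + 1 else if i < r then (1:ℝ) else 0)) = X := by
      intro i hi
      rw [Finset.mem_Ico] at hi
      rw [if_neg (by omega), if_neg (by omega), Polynomial.C_0, sub_zero]
    rw [Finset.prod_congr rfl e3, Finset.prod_const, Nat.card_Ico]
  rw [h1, h2, h3]

theorem gram_aux {n r : ℕ} (hr : 0 < r) (hrn : r < n) (G : Matrix (Fin n) (Fin n) ℝ)
    (hG : ∀ i i' : Fin n, G i i' =
      if (i : ℕ) < r then
        (if (i' : ℕ) < r then (if (i : ℕ) = (i' : ℕ) then 1 else 0) else (Real.sqrt r)⁻¹)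
      else (if (i' : ℕ) < r then (Real.sqrt r)⁻¹ else 1)) :
    G.charpoly = (X - C (((n - r : ℕ) : ℝ) + 1)) * (X - 1) ^ (r - 1) * X ^ (n - r) := by
  have hrR : (0:ℝ) < (r:ℝ) := by exact_mod_cast hr
  set s := Real.sqrt (r:ℝ) with hs
  have hs0 : s ≠ 0 := ne_of_gt (Real.sqrt_pos.mpr hrR)
  have hs2 : s * s = (r:ℝ) := Real.mul_self_sqrt hrR.le
  set wR : ℝ := ((n - r : ℕ) : ℝ) with hwR
  have hn' : (n : ℝ) = (r : ℝ) + wR := by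
    rw [hwR, Nat.cast_sub hrn.le]; ring
  have hQP := QP_eq_one hr hrn hs0 hs2
  have hPQ : Pm n r s * Qm n r s = 1 := mul_eq_one_comm.mpr hQP
  have hGP := GP_eq_PM hr hrn hs0 hs2 hn' G hG
  have hfact : G = Pm n r s * Mm n r wR s * Qm n r s := by
    calc G = G * (Pm n r s * Qm n r s) := by rw [hPQ, mul_one]
    _ = G * Pm n r s * Qm n r s := by rw [mul_assoc]
    _ = Pm n r s * Mm n r wR s * Qm n r s := by rw [hGP]
  rw [hfact, my_charpoly_conj _ _ _ hPQ, Mm_charpoly hr hrn]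

end GramAuxDefs


open GramAuxDefs in
/-- **Spectrum of the Gram matrix of the block valuation matrix.** For the `m × n` matrix `A`
whose first `m/k` columns are scaled block indicators (`1/√k` on rows `i·k ≤ j < (i+1)·k`) and
whose remaining `w = n − m/k` columns are the uniform vector `1/√m`, the eigenvalues of `AᵀA`
are `w + 1` (multiplicity `1`), `1` (multiplicity `m/k − 1`) and `0` (multiplicity `n − m/k`);
equivalently, the characteristic polynomial of `AᵀA` factors as
`(X − (w+1)) · (X − 1)^{m/k − 1} · X^{n − m/k}`. -/
theorem gram_charpoly_block_matrix {k m n : ℕ}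
    (hk : 0 < k) (hm : 0 < m) (hdvd : k ∣ m) (hn : m / k < n)
    (A : Matrix (Fin m) (Fin n) ℝ)
    (hA1 : ∀ (j : Fin m) (i : Fin n), (i : ℕ) < m / k →
      A j i =
        if (i : ℕ) * k ≤ (j : ℕ) ∧ (j : ℕ) < ((i : ℕ) + 1) * k then 1 / Real.sqrt k else 0)
    (hA2 : ∀ (j : Fin m) (i : Fin n), m / k ≤ (i : ℕ) → A j i = 1 / Real.sqrt m) :
    (Aᵀ * A).charpoly =
      (X - C (((n - m / k : ℕ) : ℝ) + 1)) * (X - 1) ^ (m / k - 1) * X ^ (n - m / k) := by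
  have hkm : k ≤ m := Nat.le_of_dvd hm hdvd
  have hr : 0 < m / k := Nat.div_pos hkm hk
  have hmkr : m = k * (m / k) := (Nat.mul_div_cancel' hdvd).symm
  have hkR : (0:ℝ) < (k:ℝ) := by exact_mod_cast hk
  have hmR : (0:ℝ) < (m:ℝ) := by exact_mod_cast hm
  have hrR : (0:ℝ) < ((m / k : ℕ):ℝ) := by exact_mod_cast hr
  have hsk0 : Real.sqrt k ≠ 0 := ne_of_gt (Real.sqrt_pos.mpr hkR)
  have hsr0 : Real.sqrt ((m / k : ℕ):ℝ) ≠ 0 := ne_of_gt (Real.sqrt_pos.mpr hrR)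
  have hsk2 : Real.sqrt k * Real.sqrt k = (k:ℝ) := Real.mul_self_sqrt hkR.le
  have hsr2 : Real.sqrt ((m / k : ℕ):ℝ) * Real.sqrt ((m / k : ℕ):ℝ) = ((m / k : ℕ):ℝ) :=
    Real.mul_self_sqrt hrR.le
  have hsm2 : Real.sqrt m * Real.sqrt m = (m:ℝ) := Real.mul_self_sqrt hmR.le
  have hsqrtm : Real.sqrt m = Real.sqrt k * Real.sqrt ((m / k : ℕ):ℝ) := by
    have : (m:ℝ) = (k:ℝ) * ((m / k : ℕ):ℝ) := by exact_mod_cast hmkr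
    rw [this, Real.sqrt_mul hkR.le]
  apply gram_aux hr hn
  intro i i'
  rw [Matrix.mul_apply]
  simp only [Matrix.transpose_apply]
  rcases lt_or_ge ((i : ℕ)) (m / k) with hi | hi
  · rcases lt_or_ge ((i' : ℕ)) (m / k) with hi' | hi'
    · rcases eq_or_ne ((i : ℕ)) ((i' : ℕ)) with heq | hne
      · -- diagonal block entry = 1
        have hpt : ∀ j : Fin m, A j i * A j i' =
            (if (i:ℕ) * k ≤ (j:ℕ) ∧ (j:ℕ) < ((i:ℕ) + 1) * k then ((k:ℝ))⁻¹ else 0) := by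
          intro j
          rw [hA1 j i hi, hA1 j i' hi', ← heq]
          split_ifs with h
          · rw [div_mul_div_comm, one_mul, hsk2, one_div]
          · exact mul_zero 0
        have hb : ((i:ℕ) + 1) * k ≤ m := by
          calc ((i:ℕ) + 1) * k ≤ (m / k) * k := Nat.mul_le_mul_right k hi
          _ = m := by rw [mul_comm, ← hmkr]
        rw [Finset.sum_congr rfl (fun j _ => hpt j), sum_block hb, if_pos hi, if_pos hi',
          if_pos heq]
        have hcount : ((i:ℕ) + 1) * k - (i:ℕ) * k = k := by
          rw [add_mul, one_mul, Nat.add_sub_cancel_left]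
        rw [hcount]
        field_simp
      · -- off-diagonal block entry = 0
        have hpt : ∀ j : Fin m, A j i * A j i' = 0 := by
          intro j
          rw [hA1 j i hi, hA1 j i' hi']
          split_ifs with h1 h2
          · exfalso
            have l1 : (i:ℕ) < (i':ℕ) + 1 :=
              lt_of_mul_lt_mul_right (lt_of_le_of_lt h1.1 h2.2) (Nat.zero_le k)
            have l2 : (i':ℕ) < (i:ℕ) + 1 :=
              lt_of_mul_lt_mul_right (lt_of_le_of_lt h2.1 h1.2) (Nat.zero_le k)
            omega
          all_goals simp
        rw [Finset.sum_congr rfl (fun j _ => hpt j), Finset.sum_const, smul_zero,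
          if_pos hi, if_pos hi', if_neg hne]
    · -- i < r ≤ i'
      have hpt : ∀ j : Fin m, A j i * A j i' =
          (if (i:ℕ) * k ≤ (j:ℕ) ∧ (j:ℕ) < ((i:ℕ) + 1) * k then
            (Real.sqrt k)⁻¹ * (Real.sqrt m)⁻¹ else 0) := by
        intro j
        rw [hA1 j i hi, hA2 j i' hi']
        split_ifs with h
        · rw [div_mul_div_comm, one_mul, one_div, mul_inv]
        · exact zero_mul _
      have hb : ((i:ℕ) + 1) * k ≤ m := by
        calc ((i:ℕ) + 1) * k ≤ (m / k) * k := Nat.mul_le_mul_right k hi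
        _ = m := by rw [mul_comm, ← hmkr]
      rw [Finset.sum_congr rfl (fun j _ => hpt j), sum_block hb, if_pos hi, if_neg (by omega)]
      have hcount : ((i:ℕ) + 1) * k - (i:ℕ) * k = k := by
        rw [add_mul, one_mul, Nat.add_sub_cancel_left]
      rw [hcount]
      rw [hsqrtm]
      field_simp
      linear_combination (-1) * hsk2
  · rcases lt_or_ge ((i' : ℕ)) (m / k) with hi' | hi'
    · -- i' < r ≤ i
      have hpt : ∀ j : Fin m, A j i * A j i' =
          (if (i':ℕ) * k ≤ (j:ℕ) ∧ (j:ℕ) < ((i':ℕ) + 1) * k then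
            (Real.sqrt k)⁻¹ * (Real.sqrt m)⁻¹ else 0) := by
        intro j
        rw [hA1 j i' hi', hA2 j i hi]
        split_ifs with h
        · rw [div_mul_div_comm, one_mul, one_div, mul_inv, mul_comm]
        · exact mul_zero _
      have hb : ((i':ℕ) + 1) * k ≤ m := by
        calc ((i':ℕ) + 1) * k ≤ (m / k) * k := Nat.mul_le_mul_right k hi'
        _ = m := by rw [mul_comm, ← hmkr]
      rw [Finset.sum_congr rfl (fun j _ => hpt j), sum_block hb, if_neg (by omega), if_pos hi']
      have hcount : ((i':ℕ) + 1) * k - (i':ℕ) * k = k := by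
        rw [add_mul, one_mul, Nat.add_sub_cancel_left]
      rw [hcount]
      rw [hsqrtm]
      field_simp
      linear_combination (-1) * hsk2
    · -- both ≥ r
      have hpt : ∀ j : Fin m, A j i * A j i' = ((m:ℝ))⁻¹ := by
        intro j
        rw [hA2 j i hi, hA2 j i' hi', div_mul_div_comm, one_mul, hsm2, one_div]
      rw [Finset.sum_congr rfl (fun j _ => hpt j), Finset.sum_const, Finset.card_univ,
        Fintype.card_fin, nsmul_eq_mul, if_neg (by omega), if_neg (by omega)]
      field_simp
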